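/- A morphism h : X → Y of cancellative S-semimodules is an epimorphism in the category of cancellative S-semimodules if and only if the subtractive closure of h(X) equals Y, i.e., every y ∈ Y satisfies y + h(x₁) = h(x₂) for some x₁, x₂ ∈ X. -/

import Mathlib

section Aux

variable {S X Y : Type} [Semiring S]
    [AddCommMonoid X] [Module S X]
    [AddCommMonoid Y] [Module S Y] [IsCancelAdd Y]

/-- The additive congruence on `Y × Y` identifying `(h x, 0)` with `(0, h x)`. -/
def epiRel (h : X →ₗ[S] Y) : AddCon (Y × Y) where
  r a b := ∃ x₁ x₂ : X, a.1 + h x₁ = b.1 + h x₂ ∧ a.2 + h x₂ = b.2 + h x₁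
  iseqv := by
    refine ⟨fun a => ⟨0, 0, rfl, rfl⟩, ?_, ?_⟩
    · rintro a b ⟨x₁, x₂, h₁, h₂⟩
      exact ⟨x₂, x₁, h₁.symm, h₂.symm⟩
    · rintro a b c ⟨x₁, x₂, h₁, h₂⟩ ⟨x₃, x₄, h₃, h₄⟩
      refine ⟨x₁ + x₃, x₄ + x₂, ?_, ?_⟩
      · have : a.1 + h x₁ + h x₃ = c.1 + h x₄ + h x₂ := by
          rw [h₁]; rw [add_right_comm, h₃, add_right_comm]
        simpa [map_add, add_assoc, add_comm, add_left_comm] using this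
      · have : a.2 + h x₂ + h x₄ = c.2 + h x₃ + h x₁ := by
          rw [h₂]; rw [add_right_comm, h₄, add_right_comm]
        simpa [map_add, add_assoc, add_comm, add_left_comm] using this
  add' := by
    rintro a b c d ⟨x₁, x₂, h₁, h₂⟩ ⟨x₃, x₄, h₃, h₄⟩
    refine ⟨x₁ + x₃, x₂ + x₄, ?_, ?_⟩
    · have : (a.1 + h x₁) + (c.1 + h x₃) = (b.1 + h x₂) + (d.1 + h x₄) := by rw [h₁, h₃]
      simpa [map_add, add_assoc, add_comm, add_left_comm] using this
    · have : (a.2 + h x₂) + (c.2 + h x₄) = (b.2 + h x₁) + (d.2 + h x₃) := by rw [h₂, h₄]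
      simpa [map_add, add_assoc, add_comm, add_left_comm] using this

variable (h : X →ₗ[S] Y)

instance : SMul S (epiRel h).Quotient where
  smul s := AddCon.lift _ ((AddCon.mk' (epiRel h)).comp (DistribMulAction.toAddMonoidHom (Y × Y) s))
    (by
      rintro ⟨a1, a2⟩ ⟨b1, b2⟩ ⟨x₁, x₂, h₁, h₂⟩
      show (((s • (a1, a2) : Y × Y)) : (epiRel h).Quotient) = ((s • (b1, b2) : Y × Y))
      rw [AddCon.eq]
      refine ⟨s • x₁, s • x₂, ?_, ?_⟩
      · simpa [smul_add, map_smul] using congrArg (s • ·) h₁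
      · simpa [smul_add, map_smul] using congrArg (s • ·) h₂)

theorem epiRel_smul_mk (s : S) (a : Y × Y) :
    s • ((a : (epiRel h).Quotient)) = ((s • a : Y × Y) : (epiRel h).Quotient) := rfl

instance : Module S (epiRel h).Quotient where
  one_smul q := AddCon.induction_on q fun a => by rw [epiRel_smul_mk, one_smul]
  mul_smul s t q := AddCon.induction_on q fun a => by
    simp only [epiRel_smul_mk, mul_smul]
  smul_zero s := by
    show s • ((0 : Y × Y) : (epiRel h).Quotient) = _
    rw [epiRel_smul_mk, smul_zero]; rfl
  smul_add s q r := AddCon.induction_on₂ q r fun a b => by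
    rw [← AddCon.coe_add, epiRel_smul_mk, epiRel_smul_mk, epiRel_smul_mk, smul_add,
      AddCon.coe_add]
  add_smul s t q := AddCon.induction_on q fun a => by
    rw [epiRel_smul_mk, epiRel_smul_mk, epiRel_smul_mk, add_smul, AddCon.coe_add]
  zero_smul q := AddCon.induction_on q fun a => by
    rw [epiRel_smul_mk, zero_smul]; rfl

instance : IsCancelAdd (epiRel h).Quotient := by
  have key : ∀ a b c : Y × Y, ((a + b : Y × Y) : (epiRel h).Quotient) = ((c + b : Y × Y)) →
      (a : (epiRel h).Quotient) = c := by
    rintro ⟨a1, a2⟩ ⟨b1, b2⟩ ⟨c1, c2⟩ hab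
    rw [AddCon.eq] at hab ⊢
    obtain ⟨x₁, x₂, h₁, h₂⟩ := hab
    refine ⟨x₁, x₂, ?_, ?_⟩
    · have : a1 + h x₁ + b1 = c1 + h x₂ + b1 := by
        simpa [add_assoc, add_comm, add_left_comm] using h₁
      exact add_right_cancel this
    · have : a2 + h x₂ + b2 = c2 + h x₁ + b2 := by
        simpa [add_assoc, add_comm, add_left_comm] using h₂
      exact add_right_cancel this
  have key2 : ∀ a b c : Y × Y, ((b + a : Y × Y) : (epiRel h).Quotient) = ((b + c : Y × Y)) →
      (a : (epiRel h).Quotient) = c := fun a b c hh =>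
    key a b c (by rwa [add_comm a b, add_comm c b])
  refine @IsCancelAdd.mk _ _ ⟨?_⟩ ⟨?_⟩
  · intro a b c hbc
    refine AddCon.induction_on₂ b c (fun x y hxy => ?_) hbc
    refine AddCon.induction_on a (fun z hz => ?_) hxy
    exact key2 x z y (by exact_mod_cast hz)
  · intro a b c hbc
    refine AddCon.induction_on₂ b c (fun x y hxy => ?_) hbc
    refine AddCon.induction_on a (fun z hz => ?_) hxy
    exact key x z y (by exact_mod_cast hz)

/-- Left inclusion as a linear map. -/
def epiInl : Y →ₗ[S] (epiRel h).Quotient where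
  toFun y := ((y, 0) : Y × Y)
  map_add' a b := by rw [← AddCon.coe_add]; norm_num
  map_smul' s a := by
    show (((s • a, 0) : Y × Y) : (epiRel h).Quotient) = s • (((a, 0) : Y × Y))
    rw [epiRel_smul_mk, Prod.smul_mk, smul_zero]

/-- Right inclusion as a linear map. -/
def epiInr : Y →ₗ[S] (epiRel h).Quotient where
  toFun y := ((0, y) : Y × Y)
  map_add' a b := by rw [← AddCon.coe_add]; norm_num
  map_smul' s a := by
    show (((0, s • a) : Y × Y) : (epiRel h).Quotient) = s • (((0, a) : Y × Y))
    rw [epiRel_smul_mk, Prod.smul_mk, smul_zero]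

end Aux

/-- a morphism `h : X → Y` of cancellative `S`-semimodules is an
epimorphism in the category of cancellative `S`-semimodules iff the subtractive
closure of `h(X)` is all of `Y`. -/
theorem epi_iff_closure_eq_top {S X Y : Type} [Semiring S]
    [AddCommMonoid X] [Module S X] [IsCancelAdd X]
    [AddCommMonoid Y] [Module S Y] [IsCancelAdd Y] (h : X →ₗ[S] Y) :
    (∀ (Z : Type) [AddCommMonoid Z] [Module S Z] [IsCancelAdd Z]
      (h₁ h₂ : Y →ₗ[S] Z), h₁.comp h = h₂.comp h → h₁ = h₂) ↔
      ∀ y : Y, ∃ x₁ x₂ : X, y + h x₁ = h x₂ := by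
  constructor
  · intro hepi y
    have := hepi (epiRel h).Quotient (epiInl h) (epiInr h) ?_
    · have hy : (epiInl h) y = (epiInr h) y := by rw [this]
      rw [show (epiInl h) y = (((y, 0) : Y × Y) : (epiRel h).Quotient) from rfl,
        show (epiInr h) y = (((0, y) : Y × Y) : (epiRel h).Quotient) from rfl,
        AddCon.eq] at hy
      obtain ⟨x₁, x₂, h₁, h₂⟩ := hy
      exact ⟨x₁, x₂, by simpa using h₁⟩
    · ext x
      show (((h x, 0) : Y × Y) : (epiRel h).Quotient) = (((0, h x) : Y × Y))
      rw [AddCon.eq]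
      exact ⟨0, x, by simp, by simp⟩
  · intro hcl Z _ _ _ h₁ h₂ hcomp
    ext y
    obtain ⟨x₁, x₂, hx⟩ := hcl y
    have e1 : h₁ y + h₁ (h x₁) = h₁ (h x₂) := by rw [← map_add, hx]
    have e2 : h₂ y + h₂ (h x₁) = h₂ (h x₂) := by rw [← map_add, hx]
    have c1 : h₁ (h x₁) = h₂ (h x₁) := LinearMap.congr_fun hcomp x₁
    have c2 : h₁ (h x₂) = h₂ (h x₂) := LinearMap.congr_fun hcomp x₂
    have : h₁ y + h₁ (h x₁) = h₂ y + h₁ (h x₁) := by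
      rw [e1, c2, ← e2, c1]
    exact add_right_cancel this
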